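/- arXiv:1505.00885 — 3 statements merged into one kernel-verified Lean document; each statement's English description precedes it below -/
import Mathlib

section
/- Under the hypotheses of the Lax equation dA/dt + [A,B] = 0, the characteristic polynomial of A(t) is independent of t; in particular every coefficient of det(y·I − A(t)) as a polynomial in y is a conserved quantity. -/
open Matrix Finset

variable {m : ℕ}

/-- Derivative of the determinant, permutation-expansion form. -/
lemma det_hasDerivAt (M : ℝ → Matrix (Fin m) (Fin m) ℂ) (N : Matrix (Fin m) (Fin m) ℂ)
    (t : ℝ) (h : ∀ i j, HasDerivAt (fun s => M s i j) (N i j) t) :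
    HasDerivAt (fun s => (M s).det)
      (∑ σ : Equiv.Perm (Fin m), ((Equiv.Perm.sign σ : ℤ) : ℂ) *
        ∑ i : Fin m, (∏ j ∈ Finset.univ.erase i, M t (σ j) j) • N (σ i) i) t := by
  have key : ∀ σ : Equiv.Perm (Fin m),
      HasDerivAt (fun s => ((Equiv.Perm.sign σ : ℤ) : ℂ) * ∏ i : Fin m, M s (σ i) i)
        (((Equiv.Perm.sign σ : ℤ) : ℂ) *
          ∑ i : Fin m, (∏ j ∈ Finset.univ.erase i, M t (σ j) j) • N (σ i) i) t := by
    intro σ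
    exact (HasDerivAt.fun_finsetProd (fun i _ => h (σ i) i)).const_mul _
  have hsum := HasDerivAt.fun_sum (u := (Finset.univ : Finset (Equiv.Perm (Fin m)))) (fun σ _ => key σ)
  have : (fun s => ∑ σ ∈ Finset.univ, ((Equiv.Perm.sign σ : ℤ) : ℂ) * ∏ i : Fin m, M s (σ i) i)
      = fun s => (M s).det := by
    funext s
    rw [Matrix.det_apply']
  rwa [this] at hsum

lemma perm_sum_eq_updateRow (M N : Matrix (Fin m) (Fin m) ℂ) :
    (∑ σ : Equiv.Perm (Fin m), ((Equiv.Perm.sign σ : ℤ) : ℂ) *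
        ∑ i : Fin m, (∏ j ∈ Finset.univ.erase i, M (σ j) j) • N (σ i) i)
    = ∑ k : Fin m, (M.updateRow k (N k)).det := by
  simp only [Matrix.det_apply', Finset.mul_sum, smul_eq_mul]
  conv_rhs => rw [Finset.sum_comm]
  refine Finset.sum_congr rfl fun σ _ => ?_
  refine Fintype.sum_equiv σ _ _ fun i => ?_
  have h1 : ∀ j ∈ Finset.univ.erase i, M.updateRow (σ i) (N (σ i)) (σ j) j = M (σ j) j := by
    intro j hj
    rw [Matrix.updateRow_ne (fun h => (Finset.mem_erase.1 hj).1 (σ.injective h))]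
  rw [← Finset.mul_prod_erase Finset.univ _ (Finset.mem_univ i),
      Finset.prod_congr rfl h1, Matrix.updateRow_self]
  ring

lemma sum_updateRow_det (M N : Matrix (Fin m) (Fin m) ℂ) :
    ∑ l : Fin m, (M.updateRow l (N l)).det = Matrix.trace (Matrix.adjugate M * N) := by
  have h1 : ∀ l, (M.updateRow l (N l)).det = ∑ k, Matrix.adjugate M k l * N l k := by
    intro l
    have hNl : (N l) = ∑ k, N l k • (Pi.single k 1 : Fin m → ℂ) := by
      funext j; simp [Pi.single_apply]
    rw [← Matrix.cramer_transpose_apply, hNl, map_sum]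
    simp only [Finset.sum_apply]
    refine Finset.sum_congr rfl fun k _ => ?_
    rw [LinearMap.map_smul, Pi.smul_apply, Matrix.cramer_transpose_apply,
      ← Matrix.adjugate_apply, smul_eq_mul, mul_comm]
    congr 1
    simp [Pi.single_apply]
  simp only [h1, Matrix.trace, Matrix.diag, Matrix.mul_apply]
  rw [Finset.sum_comm]

lemma trace_adj_comm (x : ℂ) (A B : Matrix (Fin m) (Fin m) ℂ) :
    Matrix.trace (Matrix.adjugate (x • 1 - A) * (A * B - B * A)) = 0 := by
  set M := x • (1 : Matrix (Fin m) (Fin m) ℂ) - A with hM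
  have hc : Matrix.adjugate M * A = A * Matrix.adjugate M := by
    have h1 : Matrix.adjugate M * M = M * Matrix.adjugate M := by
      rw [Matrix.adjugate_mul, Matrix.mul_adjugate]
    have hA : A = x • 1 - M := by rw [hM]; abel
    rw [hA, Matrix.mul_sub, Matrix.sub_mul, h1, Matrix.mul_smul, Matrix.smul_mul,
      Matrix.mul_one, Matrix.one_mul]
  rw [Matrix.mul_sub, Matrix.trace_sub, ← Matrix.mul_assoc, hc,
    ← Matrix.mul_assoc, Matrix.trace_mul_comm (Matrix.adjugate M * B) A,
    ← Matrix.mul_assoc, sub_self]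

lemma eval_charpoly' (x : ℂ) (M : Matrix (Fin m) (Fin m) ℂ) :
    (Matrix.charpoly M).eval x = (x • 1 - M).det := by
  rw [Matrix.charpoly, ← Polynomial.coe_evalRingHom, RingHom.map_det]
  congr 1
  ext i j
  by_cases h : i = j <;>
    simp [Matrix.charmatrix_apply, h, Matrix.one_apply, Matrix.sub_apply,
      Matrix.diagonal_apply]

/-- Along solutions of the Lax equation dA/dt = [B,A], the characteristic
polynomial of A(t) is independent of t. -/
theorem lax_charpoly_conserved (m : ℕ) (A B : ℝ → Matrix (Fin m) (Fin m) ℂ)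
    (hA : ∀ t i j, HasDerivAt (fun s => A s i j)
      ((B t * A t - A t * B t) i j) t) :
    ∀ t₁ t₂ : ℝ, Matrix.charpoly (A t₁) = Matrix.charpoly (A t₂) := by
  intro t₁ t₂
  apply Polynomial.funext
  intro x
  rw [eval_charpoly', eval_charpoly']
  set f : ℝ → ℂ := fun s => (x • (1 : Matrix (Fin m) (Fin m) ℂ) - A s).det with hf
  show f t₁ = f t₂
  have hd : ∀ t, HasDerivAt f 0 t := by
    intro t
    have hentry : ∀ i j,
        HasDerivAt (fun s => (x • (1 : Matrix (Fin m) (Fin m) ℂ) - A s) i j)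
          ((A t * B t - B t * A t) i j) t := by
      intro i j
      have h := ((hA t i j).const_sub ((x • (1 : Matrix (Fin m) (Fin m) ℂ)) i j))
      have h2 : (fun s => (x • (1 : Matrix (Fin m) (Fin m) ℂ)) i j - A s i j)
          = fun s => (x • (1 : Matrix (Fin m) (Fin m) ℂ) - A s) i j := by
        funext s; rw [Matrix.sub_apply]
      have h3 : -(B t * A t - A t * B t) i j = (A t * B t - B t * A t) i j := by
        simp [Matrix.sub_apply]
      rw [h2, h3] at h
      exact h
    have hdet := det_hasDerivAt (fun s => x • 1 - A s) (A t * B t - B t * A t) t hentry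
    rw [perm_sum_eq_updateRow, sum_updateRow_det, trace_adj_comm] at hdet
    exact hdet
  have hdiff : Differentiable ℝ f := fun t => (hd t).differentiableAt
  exact is_const_of_deriv_eq_zero hdiff (fun t => (hd t).deriv) t₁ t₂
end

section
/- Define the autonomous matrix first Painlevé Hamiltonian on ℂ⁴ (coordinates q₁, p₁, q₂, p₂) with parameters t, κ ∈ ℂ: H = −2p₂(p₂q₂ − κ) + p₁²/2 − 2q₁t − 2q₁(q₁² − q₂) + 4q₁q₂, and G = q₂·(p₁p₂ + 3q₁² − q₂ + t)² − κ·p₁·(p₁p₂ + 3q₁² − q₂ + t) − 2κ²q₁. Then {G, H} = 0, where {F,G} = Σᵢ (∂F/∂qᵢ · ∂G/∂pᵢ − ∂G/∂qᵢ · ∂F/∂pᵢ). -/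
private lemma quartic_deriv (a b c d e x : ℂ) :
    deriv (fun z : ℂ => a + b * z + c * z ^ 2 + d * z ^ 3 + e * z ^ 4) x
      = b + 2 * c * x + 3 * d * x ^ 2 + 4 * e * x ^ 3 := by
  have h : HasDerivAt (fun z : ℂ => a + b * z + c * z ^ 2 + d * z ^ 3 + e * z ^ 4)
      (b * 1 + c * ((2 : ℕ) * x ^ 1) + d * ((3 : ℕ) * x ^ 2) + e * ((4 : ℕ) * x ^ 3)) x := by
    exact ((((((hasDerivAt_id x).const_mul b).const_add a).add
      ((hasDerivAt_pow 2 x).const_mul c)).add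
      ((hasDerivAt_pow 3 x).const_mul d)).add
      ((hasDerivAt_pow 4 x).const_mul e))
  rw [h.deriv]
  push_cast
  ring

/-- The two conserved quantities H and G of the autonomous matrix first Painlevé
equation Poisson-commute: {G,H} = 0. -/
theorem matrix_PI_poisson_commute (t κ : ℂ) :
    let H : ℂ → ℂ → ℂ → ℂ → ℂ := fun q1 p1 q2 p2 =>
      -2 * p2 * (p2 * q2 - κ) + p1 ^ 2 / 2 - 2 * q1 * t
        - 2 * q1 * (q1 ^ 2 - q2) + 4 * q1 * q2
    let G : ℂ → ℂ → ℂ → ℂ → ℂ := fun q1 p1 q2 p2 =>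
      q2 * (p1 * p2 + 3 * q1 ^ 2 - q2 + t) ^ 2
        - κ * p1 * (p1 * p2 + 3 * q1 ^ 2 - q2 + t) - 2 * κ ^ 2 * q1
    ∀ q1 p1 q2 p2 : ℂ,
      (deriv (fun z => G z p1 q2 p2) q1) * (deriv (fun z => H q1 z q2 p2) p1)
        - (deriv (fun z => H z p1 q2 p2) q1) * (deriv (fun z => G q1 z q2 p2) p1)
        + (deriv (fun z => G q1 p1 z p2) q2) * (deriv (fun z => H q1 p1 q2 z) p2)
        - (deriv (fun z => H q1 p1 z p2) q2) * (deriv (fun z => G q1 p1 q2 z) p2)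
        = 0 := by
  intro H G q1 p1 q2 p2
  have e1 : (fun z => G z p1 q2 p2)
      = fun z : ℂ => (q2 * (p1*p2 - q2 + t)^2 - κ*p1*(p1*p2 - q2 + t)) + (-2*κ^2) * z
        + (6*q2*(p1*p2 - q2 + t) - 3*κ*p1) * z^2 + 0 * z^3 + (9*q2) * z^4 := by
    funext z; simp only [G]; ring
  have e2 : (fun z => H q1 z q2 p2)
      = fun z : ℂ => (-2*p2*(p2*q2 - κ) - 2*q1*t - 2*q1*(q1^2 - q2) + 4*q1*q2)
        + 0 * z + (1/2) * z^2 + 0 * z^3 + 0 * z^4 := by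
    funext z; simp only [H]; ring
  have e3 : (fun z => H z p1 q2 p2)
      = fun z : ℂ => (-2*p2*(p2*q2 - κ) + p1^2/2) + (-2*t + 6*q2) * z
        + 0 * z^2 + (-2) * z^3 + 0 * z^4 := by
    funext z; simp only [H]; ring
  have e4 : (fun z => G q1 z q2 p2)
      = fun z : ℂ => (q2*(3*q1^2 - q2 + t)^2 - 2*κ^2*q1)
        + (2*q2*(3*q1^2 - q2 + t)*p2 - κ*(3*q1^2 - q2 + t)) * z
        + (q2*p2^2 - κ*p2) * z^2 + 0 * z^3 + 0 * z^4 := by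
    funext z; simp only [G]; ring
  have e5 : (fun z => G q1 p1 z p2)
      = fun z : ℂ => (-κ*p1*(p1*p2 + 3*q1^2 + t) - 2*κ^2*q1)
        + ((p1*p2 + 3*q1^2 + t)^2 + κ*p1) * z
        + (-2*(p1*p2 + 3*q1^2 + t)) * z^2 + 1 * z^3 + 0 * z^4 := by
    funext z; simp only [G]; ring
  have e6 : (fun z => H q1 p1 q2 z)
      = fun z : ℂ => (p1^2/2 - 2*q1*t - 2*q1*(q1^2 - q2) + 4*q1*q2)
        + (2*κ) * z + (-2*q2) * z^2 + 0 * z^3 + 0 * z^4 := by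
    funext z; simp only [H]; ring
  have e7 : (fun z => H q1 p1 z p2)
      = fun z : ℂ => (2*p2*κ + p1^2/2 - 2*q1*t - 2*q1^3)
        + (-2*p2^2 + 6*q1) * z + 0 * z^2 + 0 * z^3 + 0 * z^4 := by
    funext z; simp only [H]; ring
  have e8 : (fun z => G q1 p1 q2 z)
      = fun z : ℂ => (q2*(3*q1^2 - q2 + t)^2 - κ*p1*(3*q1^2 - q2 + t) - 2*κ^2*q1)
        + (2*q2*(3*q1^2 - q2 + t)*p1 - κ*p1^2) * z
        + (q2*p1^2) * z^2 + 0 * z^3 + 0 * z^4 := by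
    funext z; simp only [G]; ring
  rw [e1, e2, e3, e4, e5, e6, e7, e8, quartic_deriv, quartic_deriv, quartic_deriv,
    quartic_deriv, quartic_deriv, quartic_deriv, quartic_deriv, quartic_deriv]
  ring
end

section
/- With H and G the autonomous matrix first Painlevé conserved quantities (H = −2p₂(p₂q₂−κ) + p₁²/2 − 2q₁t − 2q₁(q₁²−q₂) + 4q₁q₂ and G = q₂(p₁p₂+3q₁²−q₂+t)² − κp₁(p₁p₂+3q₁²−q₂+t) − 2κ²q₁, with κ ≠ 0), the 2×4 Jacobian matrix of (H, G) with respect to (q₁, p₁, q₂, p₂) has rank 2 at some point of ℂ⁴; hence H and G are functionally independent. -/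
private lemma deriv_cubic0 (a b c d : ℂ) :
    deriv (fun z : ℂ => a * z ^ 3 + b * z ^ 2 + c * z + d) 0 = c := by
  have h : HasDerivAt (fun z : ℂ => a * z ^ 3 + b * z ^ 2 + c * z + d)
      (a * ((3:ℕ) * (0:ℂ) ^ (3-1)) + b * ((2:ℕ) * (0:ℂ) ^ (2-1)) + c * 1) 0 := by
    simpa using ((((hasDerivAt_pow 3 (0:ℂ)).const_mul a).add
      ((hasDerivAt_pow 2 (0:ℂ)).const_mul b)).add
      ((hasDerivAt_id (0:ℂ)).const_mul c)).add_const d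
  simpa using h.deriv

/-- The conserved quantities H, G of the autonomous matrix first Painlevé
equation are functionally independent: at some point of ℂ⁴ their gradients are
linearly independent, i.e. the Jacobian has rank 2. -/
theorem matrix_PI_functionally_independent (t κ : ℂ) (hκ : κ ≠ 0) :
    let H : ℂ → ℂ → ℂ → ℂ → ℂ := fun q1 p1 q2 p2 =>
      -2 * p2 * (p2 * q2 - κ) + p1 ^ 2 / 2 - 2 * q1 * t
        - 2 * q1 * (q1 ^ 2 - q2) + 4 * q1 * q2
    let G : ℂ → ℂ → ℂ → ℂ → ℂ := fun q1 p1 q2 p2 =>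
      q2 * (p1 * p2 + 3 * q1 ^ 2 - q2 + t) ^ 2
        - κ * p1 * (p1 * p2 + 3 * q1 ^ 2 - q2 + t) - 2 * κ ^ 2 * q1
    ∃ q1 p1 q2 p2 : ℂ, ∀ a b : ℂ,
      (a * deriv (fun z => H z p1 q2 p2) q1 + b * deriv (fun z => G z p1 q2 p2) q1 = 0 ∧
       a * deriv (fun z => H q1 z q2 p2) p1 + b * deriv (fun z => G q1 z q2 p2) p1 = 0 ∧
       a * deriv (fun z => H q1 p1 z p2) q2 + b * deriv (fun z => G q1 p1 z p2) q2 = 0 ∧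
       a * deriv (fun z => H q1 p1 q2 z) p2 + b * deriv (fun z => G q1 p1 q2 z) p2 = 0) →
      a = 0 ∧ b = 0 := by
  intro H G
  refine ⟨0, 0, 0, 0, ?_⟩
  intro a b ⟨h1, h2, h3, h4⟩
  have eH1 : deriv (fun z => H z 0 0 0) 0 = -2 * t := by
    have : (fun z => H z 0 0 0) = fun z : ℂ => (-2) * z ^ 3 + 0 * z ^ 2 + (-2 * t) * z + 0 := by
      funext z; simp only [H]; ring
    rw [this, deriv_cubic0]
  have eH2 : deriv (fun z => H 0 z 0 0) 0 = 0 := by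
    have : (fun z => H 0 z 0 0) = fun z : ℂ => 0 * z ^ 3 + (1/2) * z ^ 2 + 0 * z + 0 := by
      funext z; simp only [H]; ring
    rw [this, deriv_cubic0]
  have eH3 : deriv (fun z => H 0 0 z 0) 0 = 0 := by
    have : (fun z => H 0 0 z 0) = fun z : ℂ => 0 * z ^ 3 + 0 * z ^ 2 + 0 * z + 0 := by
      funext z; simp only [H]; ring
    rw [this, deriv_cubic0]
  have eH4 : deriv (fun z => H 0 0 0 z) 0 = 2 * κ := by
    have : (fun z => H 0 0 0 z) = fun z : ℂ => 0 * z ^ 3 + 0 * z ^ 2 + (2 * κ) * z + 0 := by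
      funext z; simp only [H]; ring
    rw [this, deriv_cubic0]
  have eG1 : deriv (fun z => G z 0 0 0) 0 = -2 * κ ^ 2 := by
    have : (fun z => G z 0 0 0) = fun z : ℂ => 0 * z ^ 3 + 0 * z ^ 2 + (-2 * κ ^ 2) * z + 0 := by
      funext z; simp only [G]; ring
    rw [this, deriv_cubic0]
  have eG2 : deriv (fun z => G 0 z 0 0) 0 = -(κ * t) := by
    have : (fun z => G 0 z 0 0) = fun z : ℂ => 0 * z ^ 3 + 0 * z ^ 2 + (-(κ * t)) * z + 0 := by
      funext z; simp only [G]; ring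
    rw [this, deriv_cubic0]
  have eG3 : deriv (fun z => G 0 0 z 0) 0 = t ^ 2 := by
    have : (fun z => G 0 0 z 0) = fun z : ℂ => 1 * z ^ 3 + (-2 * t) * z ^ 2 + (t ^ 2) * z + 0 := by
      funext z; simp only [G]; ring
    rw [this, deriv_cubic0]
  have eG4 : deriv (fun z => G 0 0 0 z) 0 = 0 := by
    have : (fun z => G 0 0 0 z) = fun z : ℂ => 0 * z ^ 3 + 0 * z ^ 2 + 0 * z + 0 := by
      funext z; simp only [G]; ring
    rw [this, deriv_cubic0]
  rw [eH4, eG4] at h4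
  rw [eH1, eG1] at h1
  have ha : a = 0 := by
    have : a * (2 * κ) = 0 := by linear_combination h4
    rcases mul_eq_zero.mp this with h | h
    · exact h
    · exact absurd h (by simp [hκ])
  refine ⟨ha, ?_⟩
  subst ha
  have : b * (-2 * κ ^ 2) = 0 := by linear_combination h1
  rcases mul_eq_zero.mp this with h | h
  · exact h
  · exact absurd h (by simp [hκ])
end
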